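/- Let (Ω, F, P) be a probability space, let p be a positive integer, let β ∈ ℝ, and let β̂_n^1, …, β̂_n^p : Ω → ℝ be sequences of random variables. Suppose there is a set V ⊆ {1,…,p} with |V| > p/2 such that for every j ∈ V, β̂_n^j converges in probability to β (no assumption is made on β̂_n^j for j ∉ V). Then the aggregated estimator β̂_n^{(p)} := median(β̂_n^1, …, β̂_n^p) converges in probability to β. -/

import Mathlib

/-- The median of a vector `v ∈ ℝ^p`, defined via the nondecreasing rearrangement
`v₍₁₎ ≤ ⋯ ≤ v₍ₚ₎` as `v₍₍ₚ₊₁₎/₂₎` if `p` is odd and `(v₍ₚ/₂₎ + v₍ₚ/₂₊₁₎)/2` if `p`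
is even (and `0` by convention when `p = 0`). -/
noncomputable def median : {p : ℕ} → (Fin p → ℝ) → ℝ
  | 0, _ => 0
  | (q + 1), v =>
    let w : Fin (q + 1) → ℝ := v ∘ Tuple.sort v
    if (q + 1) % 2 = 1 then w ⟨(q + 1) / 2, by omega⟩
    else (w ⟨(q + 1) / 2 - 1, by omega⟩ + w ⟨(q + 1) / 2, by omega⟩) / 2

open MeasureTheory Filter Topology

lemma sorted_bound {p : ℕ} (v : Fin p → ℝ) (β ε : ℝ) (V : Finset (Fin p))
    (h : ∀ j ∈ V, |v j - β| < ε) (i : Fin p)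
    (h1 : p - V.card ≤ (i : ℕ)) (h2 : (i : ℕ) < V.card) :
    |(v ∘ Tuple.sort v) i - β| < ε := by
  set σ := Tuple.sort v with hσ
  have hmono : Monotone (v ∘ σ) := Tuple.monotone_sort v
  rw [abs_sub_lt_iff]
  constructor
  · by_contra hc
    push_neg at hc
    have hmap : ∀ k ∈ Finset.Ici i, σ k ∈ Vᶜ := by
      intro k hk
      simp only [Finset.mem_compl]
      intro hkV
      have h3 := h (σ k) hkV
      have hle : (v ∘ σ) i ≤ (v ∘ σ) k := hmono (Finset.mem_Ici.mp hk)
      rw [abs_sub_lt_iff] at h3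
      simp only [Function.comp] at hle hc
      linarith [h3.1]
    have hcard := Finset.card_le_card_of_injOn σ hmap (σ.injective.injOn)
    rw [Fin.card_Ici, Finset.card_compl, Fintype.card_fin] at hcard
    omega
  · by_contra hc
    push_neg at hc
    have hmap : ∀ k ∈ Finset.Iic i, σ k ∈ Vᶜ := by
      intro k hk
      simp only [Finset.mem_compl]
      intro hkV
      have h3 := h (σ k) hkV
      have hle : (v ∘ σ) k ≤ (v ∘ σ) i := hmono (Finset.mem_Iic.mp hk)
      rw [abs_sub_lt_iff] at h3
      simp only [Function.comp] at hle hc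
      linarith [h3.2]
    have hcard := Finset.card_le_card_of_injOn σ hmap (σ.injective.injOn)
    rw [Fin.card_Iic, Finset.card_compl, Fintype.card_fin] at hcard
    omega

lemma median_bound {p : ℕ} (hp : 0 < p) (v : Fin p → ℝ) (β ε : ℝ) (V : Finset (Fin p))
    (hV : p < 2 * V.card) (h : ∀ j ∈ V, |v j - β| < ε) :
    |median v - β| < ε := by
  obtain ⟨q, rfl⟩ : ∃ q, p = q + 1 := ⟨p - 1, by omega⟩
  have hVc : V.card ≤ q + 1 := by simpa using Finset.card_le_univ V
  rw [median]
  split_ifs with hodd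
  · exact sorted_bound v β ε V h ⟨(q + 1) / 2, by omega⟩ (by simp; omega) (by simp; omega)
  · have ha := sorted_bound v β ε V h ⟨(q + 1) / 2 - 1, by omega⟩ (by simp; omega) (by simp; omega)
    have hb := sorted_bound v β ε V h ⟨(q + 1) / 2, by omega⟩ (by simp; omega) (by simp; omega)
    rw [abs_sub_lt_iff] at ha hb ⊢
    constructor
    · linarith [ha.1, hb.1]
    · linarith [ha.2, hb.2]

/-- **Consistency of the median aggregation estimator.**
If, for every index `j` in a set `V` containing strictly more than half of
`{1,…,p}`, the estimator `β̂ₙʲ` converges in probability to `β` (with no assumption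
for `j ∉ V`), then the aggregated estimator `β̂ₙ⁽ᵖ⁾ = median(β̂ₙ¹, …, β̂ₙᵖ)`
converges in probability to `β`. -/
theorem median_aggregation_consistent
    {Ω : Type*} [MeasurableSpace Ω] (P : Measure Ω) [IsProbabilityMeasure P]
    {p : ℕ} (hp : 0 < p) (β : ℝ)
    (βhat : ℕ → Ω → Fin p → ℝ)
    (V : Finset (Fin p)) (hV : p < 2 * V.card)
    (hconv : ∀ j ∈ V, TendstoInMeasure P (fun n ω => βhat n ω j) atTop
      (fun _ => β)) :
    TendstoInMeasure P (fun n ω => median (βhat n ω)) atTop (fun _ => β) := by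
  rw [tendstoInMeasure_iff_dist]
  intro ε hε
  have hsub : ∀ n, {ω | ε ≤ dist (median (βhat n ω)) β} ⊆
      ⋃ j ∈ V, {ω | ε ≤ dist (βhat n ω j) β} := by
    intro n ω hω
    by_contra hc
    simp only [Set.mem_iUnion, Set.mem_setOf_eq, not_exists, not_le] at hc
    have hall : ∀ j ∈ V, |βhat n ω j - β| < ε := by
      intro j hj
      have := hc j hj
      rwa [Real.dist_eq] at this
    have hmed := median_bound hp (βhat n ω) β ε V hV hall
    rw [Set.mem_setOf_eq, Real.dist_eq] at hω
    linarith
  have hbound : ∀ n, P {ω | ε ≤ dist (median (βhat n ω)) β} ≤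
      ∑ j ∈ V, P {ω | ε ≤ dist (βhat n ω j) β} := fun n =>
    (measure_mono (hsub n)).trans (measure_biUnion_finset_le V _)
  have hsum : Tendsto (fun n => ∑ j ∈ V, P {ω | ε ≤ dist (βhat n ω j) β}) atTop (𝓝 0) := by
    have := tendsto_finset_sum V (fun j hj => tendstoInMeasure_iff_dist.mp (hconv j hj) ε hε)
    simpa using this
  exact tendsto_of_tendsto_of_tendsto_of_le_of_le tendsto_const_nhds hsum
    (fun n => zero_le) hbound
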